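/- Let d ≥ 1 and work in EuclideanSpace ℝ (Fin d) with standard basis vectors e_i = EuclideanSpace.single i 1. Set α = (1 − √(d+1))/d, define w : Fin (d+1) → EuclideanSpace ℝ (Fin d) by w i = e_i for i < d and w_d = α • (Σ_{i : Fin d} e_i), and let c = (1/(d+1)) • Σ_{i : Fin (d+1)} w i be the centroid. Then all centered vertices have the same norm: for all i, j : Fin (d+1), ‖w i − c‖ = ‖w j − c‖, and this common norm is positive. -/

import Mathlib

/-- Shifting the regular `d`-simplex vertices by their centroid yields vectors
of equal positive norm. -/
theorem simplex_centered_vertices_equal_norm (d : ℕ) (hd : 1 ≤ d)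
    (e : Fin d → EuclideanSpace ℝ (Fin d))
    (he : ∀ i, e i = EuclideanSpace.single i 1)
    (α : ℝ) (hα : α = (1 - Real.sqrt (d + 1)) / d)
    (w : Fin (d + 1) → EuclideanSpace ℝ (Fin d))
    (hw : ∀ i : Fin (d + 1),
      w i = if h : (i : ℕ) < d then e ⟨i, h⟩ else α • ∑ j : Fin d, e j)
    (c : EuclideanSpace ℝ (Fin d))
    (hc : c = (1 / (d + 1) : ℝ) • ∑ i : Fin (d + 1), w i) :
    (∀ i j : Fin (d + 1), ‖w i - c‖ = ‖w j - c‖) ∧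
      (∀ i : Fin (d + 1), 0 < ‖w i - c‖) := by
  have hD : (0:ℝ) < (d:ℝ) := by exact_mod_cast hd
  set s : ℝ := Real.sqrt ((d:ℝ) + 1) with hs
  have hs0 : 0 < s := Real.sqrt_pos.mpr (by positivity)
  have hs2 : s ^ 2 = (d:ℝ) + 1 := Real.sq_sqrt (by positivity)
  set β : ℝ := (1 + α) / ((d:ℝ) + 1) with hβ
  have hck : ∀ k : Fin d, c k = β := by
    intro k
    rw [hc]
    have : (∑ i : Fin (d+1), w i) k = ∑ i : Fin (d+1), w i k := by
      rw [WithLp.ofLp_sum]; exact Finset.sum_apply k _ _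
    simp only [PiLp.smul_apply, smul_eq_mul, this]
    rw [Fin.sum_univ_castSucc]
    have h1 : ∀ j : Fin d, w (Fin.castSucc j) k = if k = j then 1 else 0 := by
      intro j
      rw [hw]
      simp only [Fin.coe_castSucc, j.isLt, dif_pos]
      rw [he]
      simp [EuclideanSpace.single_apply]
    have h2 : w (Fin.last d) k = α := by
      rw [hw]
      rw [dif_neg (by simp)]
      have : (∑ j : Fin d, e j) k = ∑ j : Fin d, e j k := by rw [WithLp.ofLp_sum]; exact Finset.sum_apply k _ _
      simp only [PiLp.smul_apply, smul_eq_mul, this]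
      have : ∀ j : Fin d, e j k = if k = j then 1 else 0 := by
        intro j; rw [he]; simp [EuclideanSpace.single_apply]
      simp [this]
    simp only [h1, h2]
    rw [Finset.sum_ite_eq Finset.univ k (fun _ => (1:ℝ))]
    simp only [Finset.mem_univ, if_true, hβ]
    ring
  have key : ∀ i : Fin (d+1), ∑ k : Fin d, ((w i - c) k)^2 = (d:ℝ)/((d:ℝ)+1) := by
    intro i
    have hsub : ∀ k : Fin d, (w i - c) k = w i k - c k := fun k => rfl
    by_cases h : (i:ℕ) < d
    · have hwk : ∀ k : Fin d, w i k = if k = ⟨i, h⟩ then 1 else 0 := by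
        intro k
        rw [hw]
        simp only [dif_pos h]
        rw [he]
        simp [EuclideanSpace.single_apply]
      have : ∀ k : Fin d, ((w i - c) k)^2 = ((if k = ⟨(i:ℕ), h⟩ then (1:ℝ) else 0) - β)^2 := by
        intro k; rw [hsub, hwk, hck]
      rw [Finset.sum_congr rfl (fun k _ => this k)]
      rw [← Finset.add_sum_erase _ _ (Finset.mem_univ (⟨(i:ℕ), h⟩ : Fin d))]
      rw [if_pos rfl]
      have herase : ∀ k ∈ Finset.univ.erase (⟨(i:ℕ), h⟩ : Fin d),
          ((if k = ⟨(i:ℕ), h⟩ then (1:ℝ) else 0) - β)^2 = β^2 := by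
        intro k hk
        rw [if_neg (Finset.ne_of_mem_erase hk)]
        ring
      rw [Finset.sum_congr rfl herase, Finset.sum_const]
      rw [Finset.card_erase_of_mem (Finset.mem_univ _)]
      simp only [Finset.card_univ, Fintype.card_fin, nsmul_eq_mul]
      have hcast : ((d - 1 : ℕ) : ℝ) = (d:ℝ) - 1 := by
        rw [Nat.cast_sub hd]; norm_num
      rw [hcast, hβ, hα]
      have hd1 : (d:ℝ) + 1 ≠ 0 := by positivity
      field_simp
      ring_nf
      linear_combination ((d:ℝ)) * hs2
    · have hwk : ∀ k : Fin d, w i k = α := by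
        intro k
        rw [hw]
        simp only [dif_neg h]
        have : (∑ j : Fin d, e j) k = ∑ j : Fin d, e j k := by rw [WithLp.ofLp_sum]; exact Finset.sum_apply k _ _
        simp only [PiLp.smul_apply, smul_eq_mul, this]
        have h2 : ∀ j : Fin d, e j k = if k = j then 1 else 0 := by
          intro j; rw [he]; simp [EuclideanSpace.single_apply]
        simp [h2]
      have : ∀ k : Fin d, ((w i - c) k)^2 = (α - β)^2 := by
        intro k; rw [hsub, hwk, hck]
      rw [Finset.sum_congr rfl (fun k _ => this k), Finset.sum_const]
      simp only [Finset.card_univ, Fintype.card_fin, nsmul_eq_mul]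
      rw [hβ, hα]
      have hd1 : (d:ℝ) + 1 ≠ 0 := by positivity
      field_simp
      ring_nf
      linear_combination ((d:ℝ)^2) * hs2
  have hnorm : ∀ i : Fin (d+1), ‖w i - c‖ = Real.sqrt ((d:ℝ)/((d:ℝ)+1)) := by
    intro i
    rw [EuclideanSpace.norm_eq]
    congr 1
    rw [← key i]
    exact Finset.sum_congr rfl (fun k _ => by rw [Real.norm_eq_abs, sq_abs])
  constructor
  · intro i j; rw [hnorm, hnorm]
  · intro i
    rw [hnorm]
    exact Real.sqrt_pos.mpr (by positivity)
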